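/- Let H be a finite-dimensional complex Hilbert space and let (f_1,…,f_n) be a frame for H. If f_k ∈ span{f_1,…,f_{k−1}}, then the k-th vector of the m-th iterate Φ^m(f_1,…,f_n) converges to zero in norm as m → ∞. -/

import Mathlib

open scoped ComplexInnerProductSpace
open Finset Filter

open scoped Classical in
/-- One step of the generalized Gram–Schmidt procedure (GGSP): step `k` uses the
input vector `fk = f k` and the current tuple `g` (whose entries at indices `< k`
have already been processed).  Here `⟪a, b⟫` is conjugate-linear in `a`, so the
paper's `⟨f_k, g_j⟩` (conjugate-linear in the second slot) is `⟪g j, f k⟫`. -/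
noncomputable def ggspStep {H : Type*} [NormedAddCommGroup H] [InnerProductSpace ℂ H]
    {n : ℕ} (k : Fin n) (fk : H) (g : Fin n → H) : Fin n → H :=
  if fk = 0 then Function.update g k 0
  else
    let u := fk - ∑ j ∈ Finset.univ.filter (fun j : Fin n => j < k), ⟪g j, fk⟫ • g j
    if u = 0 then
      fun i =>
        if i < k then
          g i + (((1 / ‖fk‖ ^ 2) * (1 / Real.sqrt (1 + ‖fk‖ ^ 2) - 1) : ℝ)) •
            (⟪fk, g i⟫ • fk)
        else if i = k then (Real.sqrt (1 + ‖fk‖ ^ 2))⁻¹ • fk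
        else g i
    else Function.update g k (‖u‖⁻¹ • u)

/-- The generalized Gram–Schmidt procedure `Φ` of Casazza--Kutyniok. -/
noncomputable def GGSP {H : Type*} [NormedAddCommGroup H] [InnerProductSpace ℂ H]
    {n : ℕ} (f : Fin n → H) : Fin n → H :=
  (List.finRange n).foldl (fun g k => ggspStep k (f k) g) f

/-- `(f i)₁ⁿ` is a frame for `H`. -/
def IsFrame {H : Type*} [NormedAddCommGroup H] [InnerProductSpace ℂ H]
    {n : ℕ} (f : Fin n → H) : Prop :=
  ∃ A B : ℝ, 0 < A ∧ A ≤ B ∧ ∀ x : H,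
    A * ‖x‖ ^ 2 ≤ ∑ i, ‖⟪x, f i⟫‖ ^ 2 ∧ ∑ i, ‖⟪x, f i⟫‖ ^ 2 ≤ B * ‖x‖ ^ 2


section GGSPproof

set_option linter.unusedSectionVars false
set_option maxHeartbeats 1000000

namespace GGSPaux

variable {H : Type*} [NormedAddCommGroup H] [InnerProductSpace ℂ H]

noncomputable def dd (v : H) : ℝ := (Real.sqrt (1 + ‖v‖ ^ 2))⁻¹
noncomputable def cc (v : H) : ℝ := (1 / ‖v‖ ^ 2) * (1 / Real.sqrt (1 + ‖v‖ ^ 2) - 1)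

noncomputable def T (v : H) : H →ₗ[ℂ] H where
  toFun x := x + ((cc v : ℂ) * ⟪v, x⟫) • v
  map_add' x y := by simp [inner_add_right]; module
  map_smul' z x := by simp [inner_smul_right]; module

lemma one_add_sq_pos (v : H) : (0:ℝ) < 1 + ‖v‖ ^ 2 := by positivity

lemma sqrt_pos (v : H) : 0 < Real.sqrt (1 + ‖v‖ ^ 2) :=
  Real.sqrt_pos.2 (one_add_sq_pos v)

lemma sqrt_sq (v : H) : Real.sqrt (1 + ‖v‖ ^ 2) ^ 2 = 1 + ‖v‖ ^ 2 :=
  Real.sq_sqrt (one_add_sq_pos v).le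

lemma dd_pos (v : H) : 0 < dd v := inv_pos.2 (sqrt_pos v)

lemma dd_sq (v : H) : dd v ^ 2 = (1 + ‖v‖ ^ 2)⁻¹ := by
  rw [dd, inv_pow, sqrt_sq]

lemma dd_le_one (v : H) : dd v ≤ 1 := by
  rw [dd]
  rw [inv_le_one_iff₀]
  right
  have := sqrt_sq v
  nlinarith [sqrt_pos v, norm_nonneg v, sq_nonneg (‖v‖)]

lemma cc_mul_sq (v : H) (hv : v ≠ 0) : cc v * ‖v‖ ^ 2 = dd v - 1 := by
  have h : ‖v‖ ^ 2 ≠ 0 := by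
    have := norm_pos_iff.2 hv; positivity
  rw [cc, dd]
  field_simp

lemma key (v : H) (hv : v ≠ 0) : cc v * (1 + dd v) = -(dd v ^ 2) := by
  have h : (‖v‖:ℝ) ^ 2 ≠ 0 := by
    have := norm_pos_iff.2 hv; positivity
  have hs := sqrt_sq v
  have hsp := sqrt_pos v
  have hc : cc v * ‖v‖ ^ 2 = dd v - 1 := cc_mul_sq v hv
  have hd : dd v ^ 2 = (1 + ‖v‖ ^ 2)⁻¹ := dd_sq v
  have hd2 : dd v ^ 2 * (1 + ‖v‖ ^ 2) = 1 := by
    rw [hd]; field_simp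
  -- cc v = (dd v - 1)/‖v‖^2
  have hcc : cc v = (dd v - 1) / ‖v‖ ^ 2 := by
    field_simp at hc ⊢; linarith
  rw [hcc]
  have : (dd v - 1) * (1 + dd v) = dd v ^ 2 - 1 := by ring
  field_simp
  nlinarith [hd2]


variable {H : Type*} [NormedAddCommGroup H] [InnerProductSpace ℂ H]



lemma rsmul (r : ℝ) (x : H) : r • x = (r : ℂ) • x :=
  RCLike.real_smul_eq_coe_smul (K := ℂ) r x

/-- The rank-one perturbation `T v x = x + cc v ⟪v, x⟫ v`. -/

lemma T_apply (v x : H) : T v x = x + ((cc v : ℂ) * ⟪v, x⟫) • v := rfl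

lemma T_apply' (v x : H) : T v x = x + (cc v : ℝ) • (⟪v, x⟫ • v) := by
  rw [T_apply, rsmul, smul_smul]

lemma T_adjoint (v x y : H) : ⟪T v x, y⟫ = ⟪x, T v y⟫ := by
  simp only [T_apply, inner_add_left, inner_add_right, inner_smul_left, inner_smul_right,
    map_mul, Complex.conj_ofReal]
  rw [← inner_conj_symm v x]
  simp only [Complex.conj_conj]
  ring

lemma inner_T (v : H) (hv : v ≠ 0) (x : H) : ⟪v, T v x⟫ = (dd v : ℂ) * ⟪v, x⟫ := by
  have h : ⟪v, v⟫ = ((‖v‖ ^ 2 : ℝ) : ℂ) := by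
    rw [inner_self_eq_norm_sq_to_K]; norm_num
  have hc := cc_mul_sq v hv
  simp only [T_apply, inner_add_right, inner_smul_right, h]
  have h2 : (cc v : ℂ) * ((‖v‖:ℂ) ^ 2) = (dd v : ℂ) - 1 := by
    have := congrArg (Complex.ofReal) hc
    push_cast at this ⊢
    linear_combination this
  push_cast
  linear_combination ⟪v, x⟫ * h2

lemma T_T (v : H) (hv : v ≠ 0) (x : H) :
    T v (T v x) = x - ((dd v : ℂ) ^ 2) • (⟪v, x⟫ • v) := by
  rw [T_apply (x := T v x), inner_T v hv, T_apply]
  have hsc : (cc v : ℂ) * ⟪v,x⟫ + (cc v : ℂ) * ((dd v : ℂ) * ⟪v,x⟫)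
      = -(((dd v : ℂ) ^ 2) * ⟪v,x⟫) := by
    have := congrArg (Complex.ofReal) (key v hv)
    push_cast at this
    linear_combination ⟪v,x⟫ * this
  rw [add_assoc, ← add_smul, hsc, neg_smul, ← sub_eq_add_neg, smul_smul]

lemma T_norm_le (v : H) (hv : v ≠ 0) (x : H) : ‖T v x‖ ≤ ‖x‖ := by
  have h2 : ‖T v x‖ ^ 2 = ‖x‖ ^ 2 + (2 * cc v + cc v ^ 2 * ‖v‖ ^ 2) * ‖⟪v, x⟫‖ ^ 2 := by
    rw [T_apply]
    rw [@norm_add_sq ℂ]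
    have h1 : ‖((cc v : ℂ) * ⟪v, x⟫) • v‖ ^ 2 = cc v ^ 2 * ‖⟪v,x⟫‖ ^ 2 * ‖v‖ ^ 2 := by
      rw [norm_smul, mul_pow, norm_mul, mul_pow, Complex.norm_real, Real.norm_eq_abs, sq_abs]
    have h2 : RCLike.re ⟪x, ((cc v : ℂ) * ⟪v, x⟫) • v⟫ = cc v * ‖⟪v,x⟫‖ ^ 2 := by
      rw [inner_smul_right]
      have : ⟪x, v⟫ = starRingEnd ℂ ⟪v, x⟫ := (inner_conj_symm x v).symm
      rw [this]
      have h3 : (cc v : ℂ) * ⟪v,x⟫ * starRingEnd ℂ ⟪v,x⟫ = ((cc v * ‖⟪v,x⟫‖^2 : ℝ) : ℂ) := by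
        rw [mul_assoc, Complex.mul_conj, Complex.normSq_eq_norm_sq]
        push_cast
        ring
      rw [h3]
      exact Complex.ofReal_re _
    rw [h1, h2]
    ring
  have hkey : 2 * cc v + cc v ^ 2 * ‖v‖ ^ 2 = -(dd v ^ 2) := by
    have h1 := key v hv
    have h2 := cc_mul_sq v hv
    linear_combination h1 + cc v * h2
  have : ‖T v x‖ ^ 2 ≤ ‖x‖ ^ 2 := by
    rw [h2, hkey]
    nlinarith [sq_nonneg ‖⟪v,x⟫‖]
  calc ‖T v x‖ = Real.sqrt (‖T v x‖ ^ 2) := (Real.sqrt_sq (norm_nonneg _)).symm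
    _ ≤ Real.sqrt (‖x‖ ^ 2) := Real.sqrt_le_sqrt this
    _ = ‖x‖ := Real.sqrt_sq (norm_nonneg _)


variable {H : Type*} [NormedAddCommGroup H] [InnerProductSpace ℂ H]




lemma inner_self_c (v : H) : ⟪v, v⟫ = ((‖v‖ ^ 2 : ℝ) : ℂ) := by
  rw [inner_self_eq_norm_sq_to_K]; norm_num

lemma T_inv (v : H) (hv : v ≠ 0) (w : H) :
    T v (w + ((-(cc v) / dd v : ℝ) : ℂ) • (⟪v, w⟫ • v)) = w := by
  have hd : (dd v : ℝ) ≠ 0 := (dd_pos v).ne'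
  have hca : cc v * ‖v‖ ^ 2 = dd v - 1 := cc_mul_sq v hv
  rw [T_apply]
  rw [inner_add_right, inner_smul_right, inner_smul_right, inner_self_c]
  rw [smul_smul]
  rw [add_assoc, ← add_smul]
  have hz : ((-(cc v) / dd v : ℝ) : ℂ) * ⟪v, w⟫ +
      (cc v : ℂ) * (⟪v, w⟫ + ((-(cc v) / dd v : ℝ) : ℂ) * (⟪v, w⟫ * ((‖v‖ ^ 2 : ℝ) : ℂ))) = 0 := by
    have h1 := congrArg Complex.ofReal hca
    push_cast at h1 ⊢
    have hd' : (dd v : ℂ) ≠ 0 := by exact_mod_cast (Complex.ofReal_ne_zero).2 hd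
    field_simp
    linear_combination (-(cc v : ℂ) * ⟪v, w⟫) * h1
  rw [hz, zero_smul, add_zero]

lemma T_mem {W : Submodule ℂ H} (v : H) (hvW : v ∈ W) {x : H} (hx : x ∈ W) : T v x ∈ W := by
  rw [T_apply]
  exact W.add_mem hx (W.smul_mem _ hvW)

lemma map_T {W : Submodule ℂ H} (v : H) (hv : v ≠ 0) (hvW : v ∈ W) :
    W.map (T v) = W := by
  apply le_antisymm
  · rintro _ ⟨x, hx, rfl⟩
    exact T_mem v hvW hx
  · intro w hw
    refine ⟨w + ((-(cc v) / dd v : ℝ) : ℂ) • (⟪v, w⟫ • v), ?_, T_inv v hv w⟩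
    exact W.add_mem hw (W.smul_mem _ (W.smul_mem _ hvW))


variable {H : Type*} [NormedAddCommGroup H] [InnerProductSpace ℂ H]





variable {n : ℕ}

open scoped Classical in
/-- the "partial sum" synthesis operator over indices `< j`. -/
noncomputable def SS (g : Fin n → H) (j : ℕ) (x : H) : H :=
  ∑ i ∈ Finset.univ.filter (fun i : Fin n => (i : ℕ) < j), ⟪g i, x⟫ • g i

def WW (g : Fin n → H) (j : ℕ) : Submodule ℂ H :=
  Submodule.span ℂ (g '' {i : Fin n | (i : ℕ) < j})

def Pars (g : Fin n → H) (j : ℕ) : Prop := ∀ x ∈ WW g j, SS g j x = x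

lemma mem_WW (g : Fin n → H) {j : ℕ} {i : Fin n} (h : (i : ℕ) < j) : g i ∈ WW g j :=
  Submodule.subset_span ⟨i, h, rfl⟩

lemma WW_zero (g : Fin n → H) : WW g 0 = ⊥ := by
  simp [WW]

lemma pars_zero (g : Fin n → H) : Pars g 0 := by
  intro x hx
  rw [WW_zero] at hx
  simp only [Submodule.mem_bot] at hx
  subst hx
  simp [SS]

open scoped Classical in
lemma step_zero (k : Fin n) (g : Fin n → H) :
    ggspStep k (0 : H) g = Function.update g k 0 := by
  simp [ggspStep]

open scoped Classical in
lemma step_indep (k : Fin n) {v : H} (g : Fin n → H) (hv : v ≠ 0)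
    (hu : v - SS g k v ≠ 0) :
    ggspStep k v g = Function.update g k (‖v - SS g k v‖⁻¹ • (v - SS g k v)) := by
  have he : (∑ j ∈ Finset.univ.filter (fun j : Fin n => j < k), (⟪g j, v⟫ : ℂ) • g j)
      = SS g k v := by
    rw [SS]
    apply Finset.sum_congr _ (fun _ _ => rfl)
    apply Finset.filter_congr
    intro i _
    exact Fin.lt_def
  rw [ggspStep, if_neg hv]
  simp only [he]
  rw [if_neg hu]

open scoped Classical in
lemma step_dep (k : Fin n) {v : H} (g : Fin n → H) (hv : v ≠ 0)
    (hu : v - SS g k v = 0) :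
    ggspStep k v g = fun i =>
      if i < k then T v (g i) else if i = k then (dd v : ℝ) • v else g i := by
  have he : (∑ j ∈ Finset.univ.filter (fun j : Fin n => j < k), (⟪g j, v⟫ : ℂ) • g j)
      = SS g k v := by
    rw [SS]
    apply Finset.sum_congr _ (fun _ _ => rfl)
    apply Finset.filter_congr
    intro i _
    exact Fin.lt_def
  rw [ggspStep, if_neg hv]
  simp only [he]
  rw [if_pos hu]
  funext i
  by_cases hik : i < k
  · rw [if_pos hik, if_pos hik, T_apply']
    rfl
  · rw [if_neg hik, if_neg hik]
    simp only [dd]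


lemma filter_succ (k : Fin n) :
    Finset.univ.filter (fun i : Fin n => (i : ℕ) < (k : ℕ) + 1)
      = insert k (Finset.univ.filter (fun i : Fin n => (i : ℕ) < (k : ℕ))) := by
  ext i
  simp only [Finset.mem_filter, Finset.mem_insert, Finset.mem_univ, true_and]
  rw [Nat.lt_succ_iff_lt_or_eq]
  constructor
  · rintro (h | h)
    · exact Or.inr h
    · exact Or.inl (Fin.ext h)
  · rintro (h | h)
    · exact Or.inr (by rw [h])
    · exact Or.inl h

lemma SS_succ (g : Fin n → H) (k : Fin n) (x : H) :
    SS g ((k : ℕ) + 1) x = SS g (k : ℕ) x + ⟪g k, x⟫ • g k := by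
  classical
  rw [SS, SS, filter_succ, Finset.sum_insert (by simp)]
  rw [add_comm]

lemma set_succ (k : Fin n) :
    {i : Fin n | (i : ℕ) < (k : ℕ) + 1} = {i : Fin n | (i : ℕ) < (k : ℕ)} ∪ {k} := by
  ext i
  simp only [Set.mem_setOf_eq, Set.mem_union, Set.mem_singleton_iff]
  rw [Nat.lt_succ_iff_lt_or_eq]
  constructor
  · rintro (h | h)
    · exact Or.inl h
    · exact Or.inr (Fin.ext h)
  · rintro (h | h)
    · exact Or.inl h
    · exact Or.inr (by rw [h])

lemma WW_succ (g : Fin n → H) (k : Fin n) :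
    WW g ((k : ℕ) + 1) = WW g (k : ℕ) ⊔ Submodule.span ℂ {g k} := by
  rw [WW, WW, set_succ, Set.image_union, Set.image_singleton, Submodule.span_union]

lemma SS_congr {g₁ g₂ : Fin n → H} {j : ℕ} (h : ∀ i : Fin n, (i : ℕ) < j → g₁ i = g₂ i)
    (x : H) : SS g₁ j x = SS g₂ j x := by
  classical
  rw [SS, SS]
  apply Finset.sum_congr rfl
  intro i hi
  rw [Finset.mem_filter] at hi
  rw [h i hi.2]

lemma WW_congr {g₁ g₂ : Fin n → H} {j : ℕ} (h : ∀ i : Fin n, (i : ℕ) < j → g₁ i = g₂ i) :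
    WW g₁ j = WW g₂ j := by
  rw [WW, WW]
  congr 1
  apply Set.image_congr
  intro i hi
  exact h i hi

lemma SS_add (g : Fin n → H) (j : ℕ) (x y : H) :
    SS g j (x + y) = SS g j x + SS g j y := by
  classical
  rw [SS, SS, SS, ← Finset.sum_add_distrib]
  apply Finset.sum_congr rfl
  intro i _
  rw [inner_add_right, add_smul]

lemma SS_zero_orth (g : Fin n → H) (j : ℕ) {x : H}
    (h : ∀ i : Fin n, (i : ℕ) < j → ⟪g i, x⟫ = 0) : SS g j x = 0 := by
  classical
  rw [SS]
  apply Finset.sum_eq_zero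
  intro i hi
  rw [Finset.mem_filter] at hi
  rw [h i hi.2, zero_smul]

lemma SS_mem_WW (g : Fin n → H) (j : ℕ) (x : H) : SS g j x ∈ WW g j := by
  classical
  rw [SS]
  apply Submodule.sum_mem
  intro i hi
  rw [Finset.mem_filter] at hi
  exact Submodule.smul_mem _ _ (mem_WW g hi.2)

lemma orth_u (g : Fin n → H) (k : Fin n) (hP : Pars g k) (v : H) {x : H}
    (hx : x ∈ WW g (k : ℕ)) : ⟪v - SS g (k : ℕ) v, x⟫ = 0 := by
  classical
  have hSx := hP x hx
  rw [inner_sub_left, sub_eq_zero]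
  conv_lhs => rw [← hSx]
  rw [SS, SS, inner_sum, sum_inner]
  apply Finset.sum_congr rfl
  intro i _
  rw [inner_smul_left, inner_smul_right, ← inner_conj_symm (g i) v]
  simp only [Complex.conj_conj]
  ring

/-- The key step lemma: one GGSP step preserves "prefix is a Parseval frame of its
span" and the span grows exactly by the new vector. -/
lemma pars_step (g : Fin n → H) (k : Fin n) (v : H) (hP : Pars g (k : ℕ)) :
    Pars (ggspStep k v g) ((k : ℕ) + 1) ∧
      WW (ggspStep k v g) ((k : ℕ) + 1) = WW g (k : ℕ) ⊔ Submodule.span ℂ {v} := by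
  classical
  by_cases hv : v = 0
  · subst hv
    rw [step_zero]
    set g' := Function.update g k (0 : H) with hg'
    have hlt : ∀ i : Fin n, (i : ℕ) < (k : ℕ) → g' i = g i := by
      intro i hi
      rw [hg', Function.update_of_ne (Fin.ne_of_lt (Fin.lt_def.2 hi)) _ _]
    have hk' : g' k = 0 := Function.update_self _ _ _
    have hWW : WW g' ((k : ℕ) + 1) = WW g (k : ℕ) := by
      rw [WW_succ, WW_congr hlt, hk']
      simp
    constructor
    · intro x hx
      rw [hWW] at hx
      rw [SS_succ, SS_congr hlt, hk', hP x hx]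
      simp
    · rw [hWW]
      simp
  · by_cases hu : v - SS g (k : ℕ) v = 0
    · -- dependent case
      have hvW : v ∈ WW g (k : ℕ) := by
        have : v = SS g (k : ℕ) v := by
          rw [← sub_eq_zero]; exact hu
        rw [this]; exact SS_mem_WW g _ v
      rw [step_dep k g hv hu]
      set g' : Fin n → H := fun i =>
        if i < k then T v (g i) else if i = k then (dd v : ℝ) • v else g i with hg'
      have hlt : ∀ i : Fin n, (i : ℕ) < (k : ℕ) → g' i = T v (g i) := by
        intro i hi
        rw [hg']
        simp only [if_pos (Fin.lt_def.2 hi)]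
      have hk' : g' k = (dd v : ℝ) • v := by
        simp [hg']
      have hWk : WW g' (k : ℕ) = WW g (k : ℕ) := by
        rw [WW, WW]
        have himg : g' '' {i : Fin n | (i : ℕ) < (k : ℕ)}
            = T v '' (g '' {i : Fin n | (i : ℕ) < (k : ℕ)}) := by
          rw [Set.image_image]
          exact Set.image_congr fun i hi => hlt i hi
        rw [himg, Submodule.span_image]
        exact map_T v hv hvW
      have hWW : WW g' ((k : ℕ) + 1) = WW g (k : ℕ) := by
        have hdun : IsUnit (((dd v : ℝ) : ℂ)) :=
          isUnit_iff_ne_zero.2 (by exact_mod_cast (dd_pos v).ne')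
        rw [WW_succ, hWk, hk', rsmul, Submodule.span_singleton_smul_eq hdun v]
        exact sup_eq_left.2 ((Submodule.span_singleton_le_iff_mem v _).2 hvW)
      refine ⟨?_, ?_⟩
      · intro x hx
        rw [hWW] at hx
        rw [SS_succ, SS_congr hlt]
        have hTx : T v x ∈ WW g (k : ℕ) := T_mem v hvW hx
        have h1 : SS (fun i => T v (g i)) (k : ℕ) x = T v (T v x) := by
          rw [SS]
          have : ∀ i : Fin n, ⟪T v (g i), x⟫ • T v (g i) = T v (⟪g i, T v x⟫ • g i) := by
            intro i
            rw [T_adjoint, map_smul]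
          simp_rw [this]
          rw [← map_sum, ← SS, hP _ hTx]
        rw [h1, hk', T_T v hv x, rsmul, inner_smul_left, Complex.conj_ofReal]
        module
      · rw [hWW]
        exact (sup_eq_left.2 ((Submodule.span_singleton_le_iff_mem v _).2 hvW)).symm
    · -- independent case
      rw [step_indep k g hv hu]
      set u := v - SS g (k : ℕ) v with hu'
      set w := ‖u‖⁻¹ • u with hw
      set g' := Function.update g k w with hg'
      have hlt : ∀ i : Fin n, (i : ℕ) < (k : ℕ) → g' i = g i := by
        intro i hi
        rw [hg', Function.update_of_ne (Fin.ne_of_lt (Fin.lt_def.2 hi)) _ _]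
      have hk' : g' k = w := Function.update_self _ _ _
      have hnw : ‖w‖ = 1 := by
        rw [hw, norm_smul, norm_inv, norm_norm, inv_mul_cancel₀ (norm_ne_zero_iff.2 hu)]
      have horth : ∀ x ∈ WW g (k : ℕ), ⟪w, x⟫ = 0 := by
        intro x hx
        rw [hw, rsmul, inner_smul_left]
        rw [orth_u g k hP v hx]
        simp
      have horth' : ∀ x ∈ WW g (k : ℕ), ⟪x, w⟫ = 0 := by
        intro x hx
        rw [← inner_conj_symm x w, horth x hx, map_zero]
      have hWW : WW g' ((k : ℕ) + 1) = WW g (k : ℕ) ⊔ Submodule.span ℂ {w} := by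
        rw [WW_succ, WW_congr hlt, hk']
      have hWWv : WW g (k : ℕ) ⊔ Submodule.span ℂ {w} = WW g (k : ℕ) ⊔ Submodule.span ℂ {v} := by
        have hwu : Submodule.span ℂ {w} = Submodule.span ℂ {u} := by
          have huun : IsUnit (((‖u‖⁻¹ : ℝ) : ℂ)) :=
            isUnit_iff_ne_zero.2 (by exact_mod_cast inv_ne_zero (norm_ne_zero_iff.2 hu))
          rw [hw, rsmul]
          exact Submodule.span_singleton_smul_eq huun u
        rw [hwu]
        apply le_antisymm
        · apply sup_le le_sup_left
          rw [Submodule.span_singleton_le_iff_mem]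
          have : u = v - SS g (k:ℕ) v := hu'
          rw [this]
          apply Submodule.sub_mem
          · exact Submodule.mem_sup_right (Submodule.mem_span_singleton_self v)
          · exact Submodule.mem_sup_left (SS_mem_WW g _ v)
        · apply sup_le le_sup_left
          rw [Submodule.span_singleton_le_iff_mem]
          have : v = u + SS g (k:ℕ) v := by rw [hu']; abel
          rw [this]
          apply Submodule.add_mem
          · exact Submodule.mem_sup_right (Submodule.mem_span_singleton_self u)
          · exact Submodule.mem_sup_left (SS_mem_WW g _ v)
      refine ⟨?_, by rw [hWW]; exact hWWv⟩
      intro x hx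
      rw [hWW] at hx
      rcases Submodule.mem_sup.1 hx with ⟨y, hy, z, hz, rfl⟩
      rcases Submodule.mem_span_singleton.1 hz with ⟨t, rfl⟩
      rw [SS_succ, SS_congr hlt, hk']
      have h1 : SS g (k : ℕ) (y + t • w) = y := by
        rw [SS_add]
        have h2 : SS g (k:ℕ) (t • w) = 0 := by
          apply SS_zero_orth
          intro i hi
          rw [inner_smul_right, horth' (g i) (mem_WW g hi), mul_zero]
        rw [h2, hP y hy, add_zero]
      rw [h1]
      have h3 : ⟪w, y + t • w⟫ = t := by
        rw [inner_add_right, inner_smul_right, horth y hy, zero_add,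
          inner_self_eq_norm_sq_to_K, hnw]
        norm_num
      rw [h3]

/-- partial run of the GGSP fold. -/
noncomputable def run (f : Fin n → H) (j : ℕ) : Fin n → H :=
  ((List.finRange n).take j).foldl (fun g k => ggspStep k (f k) g) f

lemma GGSP_eq_run (f : Fin n → H) : GGSP f = run f n := by
  rw [GGSP, run, List.take_of_length_le (by simp)]

lemma run_succ (f : Fin n → H) {j : ℕ} (h : j < n) :
    run f (j + 1) = ggspStep ⟨j, h⟩ (f ⟨j, h⟩) (run f j) := by
  rw [run, run]
  rw [List.take_succ, List.foldl_append]
  have hg : (List.finRange n)[j]? = some ⟨j, h⟩ := by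
    rw [List.getElem?_eq_getElem (by simpa using h)]
    simp
  rw [hg]
  rfl

/-- the contraction property of a later GGSP step on earlier entries -/
lemma step_shrink (g : Fin n → H) (l : Fin n) (v : H) :
    ∃ S : H →ₗ[ℂ] H, (∀ x, ‖S x‖ ≤ ‖x‖) ∧
      ∀ i : Fin n, i < l → ggspStep l v g i = S (g i) := by
  classical
  by_cases hv : v = 0
  · subst hv
    refine ⟨LinearMap.id, fun x => le_refl _, fun i hi => ?_⟩
    rw [step_zero, Function.update_of_ne (Fin.ne_of_lt hi)]
    rfl
  · by_cases hu : v - SS g (l : ℕ) v = 0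
    · refine ⟨T v, T_norm_le v hv, fun i hi => ?_⟩
      rw [step_dep l g hv hu]
      simp only [if_pos hi]
    · refine ⟨LinearMap.id, fun x => le_refl _, fun i hi => ?_⟩
      rw [step_indep l g hv hu, Function.update_of_ne (Fin.ne_of_lt hi)]
      rfl

lemma set_succ' {j : ℕ} (h : j < n) :
    {i : Fin n | (i : ℕ) < j + 1} = {i : Fin n | (i : ℕ) < j} ∪ {(⟨j, h⟩ : Fin n)} := by
  ext i
  simp only [Set.mem_setOf_eq, Set.mem_union, Set.mem_singleton_iff]
  rw [Nat.lt_succ_iff_lt_or_eq]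
  constructor
  · rintro (hh | hh)
    · exact Or.inl hh
    · exact Or.inr (Fin.ext hh)
  · rintro (hh | hh)
    · exact Or.inl hh
    · exact Or.inr (by rw [hh])

/-- the prefix of a run is a Parseval frame for its span, which is the span of the
original prefix. -/
lemma run_prefix (f : Fin n → H) :
    ∀ j : ℕ, j ≤ n → Pars (run f j) j ∧
      WW (run f j) j = Submodule.span ℂ (f '' {i : Fin n | (i : ℕ) < j}) := by
  intro j
  induction j with
  | zero =>
    intro _
    refine ⟨pars_zero _, ?_⟩
    rw [WW_zero]
    have : {i : Fin n | (i : ℕ) < 0} = (∅ : Set (Fin n)) := by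
      ext i; simp
    rw [this]
    simp
  | succ j ih =>
    intro hj
    have hjn : j < n := hj
    obtain ⟨hP, hW⟩ := ih (le_of_lt hjn)
    set k : Fin n := ⟨j, hjn⟩ with hk
    have hco : (k : ℕ) = j := rfl
    have hstep := pars_step (run f j) k (f k) (by rw [hco]; exact hP)
    rw [hco] at hstep
    rw [run_succ f hjn, ← hk]
    refine ⟨hstep.1, ?_⟩
    rw [hstep.2, hW, set_succ' hjn, Set.image_union, Set.image_singleton,
      Submodule.span_union]

lemma GGSP_key (f : Fin n → H) (k : Fin n) (hk : f k ∈ WW f (k : ℕ)) :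
    (GGSP f) k ∈ WW (GGSP f) (k : ℕ) ∧
      ‖(GGSP f) k‖ ≤ ‖f k‖ * dd (f k) := by
  classical
  obtain ⟨hP, hW⟩ := run_prefix f (k : ℕ) k.isLt.le
  set g := run f (k : ℕ) with hg
  have hfk : f k ∈ WW g (k : ℕ) := by
    rw [hW]; exact hk
  -- the step at index k
  have hrs : run f ((k : ℕ) + 1) = ggspStep k (f k) g := by
    rw [run_succ f k.isLt]
  have hbase : (run f ((k : ℕ) + 1)) k ∈ WW (run f ((k : ℕ) + 1)) (k : ℕ) ∧
      ‖(run f ((k : ℕ) + 1)) k‖ ≤ ‖f k‖ * dd (f k) := by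
    by_cases hv : f k = 0
    · rw [hrs, hv, step_zero]
      constructor
      · rw [Function.update_self]
        exact Submodule.zero_mem _
      · rw [Function.update_self, norm_zero]
        simp
    · have hu : f k - SS g (k : ℕ) (f k) = 0 := by
        rw [hP (f k) hfk, sub_self]
      rw [hrs, step_dep k g hv hu]
      set g' : Fin n → H := fun i =>
        if i < k then T (f k) (g i) else if i = k then (dd (f k) : ℝ) • (f k) else g i
        with hg'
      have hk' : g' k = (dd (f k) : ℝ) • (f k) := by simp [hg']
      have hlt : ∀ i : Fin n, (i : ℕ) < (k : ℕ) → g' i = T (f k) (g i) := by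
        intro i hi
        simp only [hg', if_pos (Fin.lt_def.2 hi)]
      have hWk : WW g' (k : ℕ) = WW g (k : ℕ) := by
        rw [WW, WW]
        have himg : g' '' {i : Fin n | (i : ℕ) < (k : ℕ)}
            = T (f k) '' (g '' {i : Fin n | (i : ℕ) < (k : ℕ)}) := by
          rw [Set.image_image]
          exact Set.image_congr fun i hi => hlt i hi
        rw [himg, Submodule.span_image]
        exact map_T (f k) hv hfk
      constructor
      · rw [hk', hWk]
        exact Submodule.smul_mem _ _ hfk
      · rw [hk', norm_smul, Real.norm_eq_abs, abs_of_pos (dd_pos (f k)), mul_comm]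
  -- the tail
  have htail : ∀ j : ℕ, (k : ℕ) + 1 ≤ j → j ≤ n →
      (run f j) k ∈ WW (run f j) (k : ℕ) ∧ ‖(run f j) k‖ ≤ ‖f k‖ * dd (f k) := by
    intro j
    induction j with
    | zero => omega
    | succ j ih =>
      intro h1 h2
      rcases Nat.lt_or_ge j ((k : ℕ) + 1) with hj | hj
      · have : j = (k : ℕ) := by omega
        subst this
        exact hbase
      · have hjn : j < n := h2
        obtain ⟨hmem, hnorm⟩ := ih hj (le_of_lt hjn)
        set l : Fin n := ⟨j, hjn⟩ with hl
        have hkl : k < l := by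
          rw [Fin.lt_def]
          show (k : ℕ) < j
          omega
        obtain ⟨S, hS, hSi⟩ := step_shrink (run f j) l (f l)
        have hrs' : run f (j + 1) = ggspStep l (f l) (run f j) := run_succ f hjn
        have hentry : (run f (j + 1)) k = S ((run f j) k) := by
          rw [hrs']; exact hSi k hkl
        constructor
        · rw [hentry]
          have h3 := Submodule.apply_mem_span_image_of_mem_span (s := (run f j) ''
            {i : Fin n | (i : ℕ) < (k : ℕ)}) S hmem
          rw [Set.image_image] at h3
          have himg : (fun i => S ((run f j) i)) '' {i : Fin n | (i : ℕ) < (k : ℕ)}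
              = (run f (j + 1)) '' {i : Fin n | (i : ℕ) < (k : ℕ)} := by
            apply Set.image_congr
            intro i hi
            rw [hrs']
            exact (hSi i (lt_trans (Fin.lt_def.2 hi) hkl)).symm
          rw [himg] at h3
          exact h3
        · rw [hentry]
          exact le_trans (hS _) hnorm
  have := htail n (by omega) (le_refl n)
  rw [GGSP_eq_run]
  exact this

end GGSPaux
end GGSPproof

/-- If `f k` lies in the span of the previous frame vectors, then the `k`-th vector of
the `m`-th GGSP iterate converges to zero as `m → ∞`. -/
theorem ggsp_iterate_dependent_tendsto_zero {H : Type*} [NormedAddCommGroup H]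
    [InnerProductSpace ℂ H] [FiniteDimensional ℂ H] {n : ℕ} (f : Fin n → H)
    (hf : IsFrame f) (k : Fin n)
    (hk : f k ∈ Submodule.span ℂ (f '' {j : Fin n | j < k})) :
    Tendsto (fun m : ℕ => ‖(GGSP^[m] f) k‖) atTop (nhds 0) := by
  classical
  have hk' : f k ∈ GGSPaux.WW f (k : ℕ) := hk
  have hGood : ∀ m : ℕ, (GGSP^[m] f) k ∈ GGSPaux.WW (GGSP^[m] f) (k : ℕ) := by
    intro m
    induction m with
    | zero => exact hk'
    | succ m ih =>
      rw [Function.iterate_succ_apply']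
      exact (GGSPaux.GGSP_key _ k ih).1
  have hrec : ∀ m : ℕ, ‖(GGSP^[m + 1] f) k‖ ≤
      ‖(GGSP^[m] f) k‖ * GGSPaux.dd ((GGSP^[m] f) k) := by
    intro m
    rw [Function.iterate_succ_apply']
    exact (GGSPaux.GGSP_key _ k (hGood m)).2
  set a : ℕ → ℝ := fun m => ‖(GGSP^[m] f) k‖ with ha
  set c : ℝ := a 0 with hc
  have hbound : ∀ m : ℕ, a m ^ 2 ≤ c ^ 2 / (1 + (m : ℝ) * c ^ 2) := by
    intro m
    induction m with
    | zero => simp [hc]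
    | succ m ih =>
      have hdd := GGSPaux.dd_sq ((GGSP^[m] f) k)
      have hnn : 0 ≤ a m * GGSPaux.dd ((GGSP^[m] f) k) :=
        mul_nonneg (norm_nonneg _) (GGSPaux.dd_pos _).le
      have h1 : a (m + 1) ^ 2 ≤ a m ^ 2 * (1 + a m ^ 2)⁻¹ := by
        have hsq := pow_le_pow_left₀ (norm_nonneg _) (hrec m) 2
        rw [mul_pow, hdd] at hsq
        exact hsq
      set t : ℝ := a m ^ 2 with ht
      have htnn : (0:ℝ) ≤ t := sq_nonneg _
      have hA : (0:ℝ) < 1 + t := by linarith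
      have hC : (0:ℝ) < 1 + (m : ℝ) * c ^ 2 := by positivity
      have hB : (0:ℝ) < 1 + ((m : ℕ) + 1 : ℝ) * c ^ 2 := by positivity
      have hihC : t * (1 + (m : ℝ) * c ^ 2) ≤ c ^ 2 := (le_div_iff₀ hC).1 ih
      have h2 : t * (1 + t)⁻¹ ≤ c ^ 2 / (1 + ((m : ℕ) + 1 : ℝ) * c ^ 2) := by
        rw [inv_eq_one_div, mul_one_div, div_le_div_iff₀ hA hB]
        nlinarith [hihC]
      calc a (m + 1) ^ 2 ≤ t * (1 + t)⁻¹ := h1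
        _ ≤ c ^ 2 / (1 + ((m : ℕ) + 1 : ℝ) * c ^ 2) := h2
        _ = c ^ 2 / (1 + ((m + 1 : ℕ) : ℝ) * c ^ 2) := by push_cast; ring_nf
  have hle : ∀ m : ℕ, a m ≤ Real.sqrt (c ^ 2 / (1 + (m : ℝ) * c ^ 2)) := by
    intro m
    have := Real.sqrt_le_sqrt (hbound m)
    rwa [Real.sqrt_sq (norm_nonneg _)] at this
  have htends : Tendsto (fun m : ℕ => Real.sqrt (c ^ 2 / (1 + (m : ℝ) * c ^ 2)))
      atTop (nhds 0) := by
    by_cases hc0 : c = 0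
    · simp [hc0]
    · have hc2 : (0:ℝ) < c ^ 2 := by positivity
      have hden : Tendsto (fun m : ℕ => 1 + (m : ℝ) * c ^ 2) atTop atTop := by
        apply tendsto_atTop_add_const_left
        exact Tendsto.atTop_mul_const hc2 tendsto_natCast_atTop_atTop
      have hfrac : Tendsto (fun m : ℕ => c ^ 2 / (1 + (m : ℝ) * c ^ 2)) atTop (nhds 0) :=
        Tendsto.div_atTop tendsto_const_nhds hden
      have := (Real.continuous_sqrt.tendsto 0).comp hfrac
      simpa [Function.comp_def] using this
  exact squeeze_zero (fun m => norm_nonneg _) hle htends
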